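/- Let a, b, c > 0, let κ ∈ ℝ, let ε > 0, and set η = (a·c)/((a+b)·(b+c)). Define S(ℓ) = κ·ln(ℓ/ε). Then 0 < η < 1 and S(a+b) + S(b+c) − η·(S(a) + S(c)) − (1−η)·(S(b) + S(a+b+c)) = κ·h(η), where h(η) = −η·ln(η) − (1−η)·ln(1−η); in particular the left-hand side does not depend on ε. -/
import Mathlib


open Real

/-- The line version of the vector fixed-point constant: for interval lengths `a, b, c` with
cross-ratio `η = ac/((a+b)(b+c))` and entanglement entropy `S(ℓ) = κ ln(ℓ/ε)`, one has
`0 < η < 1` and `S(a+b) + S(b+c) - η(S(a)+S(c)) - (1-η)(S(b)+S(a+b+c)) = κ h(η)`,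
where `h` is the binary entropy function. -/
theorem stmt_13 (a b c κ ε : ℝ) (ha : 0 < a) (hb : 0 < b) (hc : 0 < c) (hε : 0 < ε)
    (η : ℝ) (hη : η = (a * c) / ((a + b) * (b + c)))
    (S : ℝ → ℝ) (hS : ∀ ℓ : ℝ, S ℓ = κ * Real.log (ℓ / ε)) :
    0 < η ∧ η < 1 ∧
    S (a + b) + S (b + c) - η * (S a + S c) - (1 - η) * (S b + S (a + b + c))
      = κ * (-η * Real.log η - (1 - η) * Real.log (1 - η)) := by
  have hab : 0 < a + b := by linarith
  have hbc : 0 < b + c := by linarith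
  have habc : 0 < a + b + c := by linarith
  have hden : 0 < (a + b) * (b + c) := mul_pos hab hbc
  have hη0 : 0 < η := by rw [hη]; positivity
  have hη1 : η < 1 := by
    rw [hη, div_lt_one hden]; nlinarith
  refine ⟨hη0, hη1, ?_⟩
  have h1 : 1 - η = (b * (a + b + c)) / ((a + b) * (b + c)) := by
    rw [hη]; field_simp; ring
  have lη : Real.log η = Real.log a + Real.log c - (Real.log (a+b) + Real.log (b+c)) := by
    rw [hη, Real.log_div (by positivity) (by positivity),
      Real.log_mul ha.ne' hc.ne', Real.log_mul hab.ne' hbc.ne']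
  have l1η : Real.log (1 - η)
      = Real.log b + Real.log (a+b+c) - (Real.log (a+b) + Real.log (b+c)) := by
    rw [h1, Real.log_div (by positivity) (by positivity),
      Real.log_mul hb.ne' habc.ne', Real.log_mul hab.ne' hbc.ne']
  simp only [hS]
  rw [lη, l1η,
    Real.log_div ha.ne' hε.ne', Real.log_div hb.ne' hε.ne', Real.log_div hc.ne' hε.ne',
    Real.log_div hab.ne' hε.ne', Real.log_div hbc.ne' hε.ne', Real.log_div habc.ne' hε.ne']
  ring
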